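/- (Claim 4.10.) Fix a realization (A, R_A, R_{B₀}, B, R_B) in the support of the process and an index i ∈ {1, …, n/2}. If a triple (x, r_x, r_i) ∈ P_i(F(A, R_A, R_{B₀})) remains feasible after B, then the first bit of Query(G(F(A, R_A, R_{B₀}), B, R_B), x) equals 1; that is, the data structure G must report that x belongs to A when queried with x. -/

import Mathlib

noncomputable section

namespace DynRetrieval

/-! ### Entropy on a finite sample space with the uniform distribution -/

/-- The probability of an event `s` under the uniform distribution on a finite type `Ω`. -/
def unifPr (Ω : Type*) [Fintype Ω] (s : Set Ω) : ℝ :=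
  (Nat.card s : ℝ) / (Fintype.card Ω : ℝ)

/-- The Shannon entropy (in bits) of a random variable `X` defined on a finite sample
space `Ω` carrying the uniform distribution. -/
def entropy {Ω : Type*} {α : Type*} [Fintype Ω] (X : Ω → α) : ℝ :=
  (∑ ω : Ω, -Real.logb 2 (unifPr Ω {ω' | X ω' = X ω})) / (Fintype.card Ω : ℝ)

/-- The conditional Shannon entropy `H(X | Y) = H(X, Y) − H(Y)` (in bits). -/
def condEntropy {Ω : Type*} {α β : Type*} [Fintype Ω] (X : Ω → α) (Y : Ω → β) : ℝ :=
  entropy (fun ω => (X ω, Y ω)) - entropy Y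

/-- The first bit of a `v`-bit string. -/
def firstBit {v : ℕ} (r : Fin v → Bool) : Bool :=
  if h : 0 < v then r ⟨0, h⟩ else false

/-! ### The dynamic random process

Parameters `n v u`, with `n` even, `u ≥ n³`, and `u − n/2` divisible by `n/2`.
The set `[u] \ [n/2]` is split into `n/2` consecutive parts, each of size
`2u/n − 1 = (u − n/2)/(n/2)`.  An element of the `i`-th part is identified by its
position `a` inside the part; as a (0-indexed) natural number it is the key
`n/2 + i·((u − n/2)/(n/2)) + a`.  The keys `0, …, n/2 − 1` form the set `B₀`. -/

variable (n v u : ℕ)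

/-- The number of parts, `n/2`. -/
def K : ℕ := n / 2

/-- The size of each part, `(u − n/2)/(n/2) = 2u/n − 1`. -/
def W : ℕ := (u - n / 2) / (n / 2)

/-- The key (element of `[u] \ [n/2]`, 0-indexed) at position `a` of part `i`. -/
def key (i : Fin (K n)) (a : Fin (W n u)) : ℕ := n / 2 + (i : ℕ) * W n u + (a : ℕ)

/-- The model hypotheses on the parameters: `n` even with `n ≥ 4`, `v ≥ 1`, `u ≥ n³`,
and `u − n/2` divisible by `n/2`. -/
def Hyp : Prop :=
  n % 2 = 0 ∧ 4 ≤ n ∧ 1 ≤ v ∧ n ^ 3 ≤ u ∧ n / 2 ∣ (u - n / 2)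

/-- Raw data of a realization of the first stage of the process: `(A, R_A, R_{B₀})`.
`A i` is (the position of) the element of `A` in part `i`, `R_A i` its `v`-bit value, and
`R_{B₀} i` the `v`-bit value of the key `i ∈ B₀ = {0, …, n/2 − 1}`. -/
abbrev FData : Type :=
  (Fin (K n) → Fin (W n u)) × (Fin (K n) → Fin v → Bool) × (Fin (K n) → Fin v → Bool)

/-- Validity of a realization `(A, R_A, R_{B₀})`: every value of `R_A` has first bit `1`
(`A` and `R_{B₀}` are unconstrained). -/
def ValidF (d : FData n v u) : Prop := ∀ j, firstBit (d.2.1 j) = true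

/-- Raw data of a full realization of the dynamic random process:
`((A, R_A, R_{B₀}), (B, R_B))`. -/
abbrev DynData : Type :=
  FData n v u × ((Fin (K n) → Fin (W n u)) × (Fin (K n) → Fin v → Bool))

/-- Validity of a full realization: `R_A` has first bits `1`, `B` avoids `A` in each
part, and `R_B` has first bits `0`. -/
def DynValid (d : DynData n v u) : Prop :=
  ValidF n v u d.1 ∧ (∀ j, d.2.1 j ≠ d.1.1 j) ∧ ∀ j, firstBit (d.2.2 j) = false

/-- The sample space of the dynamic random process: since every random choice in the
process is uniform (subject to the stated constraints, whose number of options does not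
depend on the previous choices), the joint distribution of `(A, R_A, R_{B₀}, B, R_B)` is
the uniform distribution on the set of valid realizations. -/
abbrev DynOmega : Type := {d : DynData n v u // DynValid n v u d}

noncomputable instance : Fintype (DynOmega n v u) := Fintype.ofFinite _

/-- The type of the (deterministic) map `F`, building a bit string from a realization of
`(A, R_A, R_{B₀})`. -/
abbrev FBuilder : Type :=
  (Fin (K n) → Fin (W n u)) → (Fin (K n) → Fin v → Bool) →
    (Fin (K n) → Fin v → Bool) → List Bool

/-- The type of the (deterministic) map `G`, building a bit string from a bit string
together with a realization of `(B, R_B)`. -/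
abbrev GBuilder : Type :=
  List Bool → (Fin (K n) → Fin (W n u)) → (Fin (K n) → Fin v → Bool) → List Bool

/-- The type of the (deterministic) query map: a bit string and a key give a `v`-bit
value. -/
abbrev QueryFn (v : ℕ) : Type := List Bool → ℕ → Fin v → Bool

/-- The random bit string `F = F(A, R_A, R_{B₀})`. -/
def Frv (F : FBuilder n v u) (ω : DynOmega n v u) : List Bool :=
  F ω.1.1.1 ω.1.1.2.1 ω.1.1.2.2

/-- The random bit string `G = G(F(A, R_A, R_{B₀}), B, R_B)`. -/
def Grv (F : FBuilder n v u) (G : GBuilder n v u) (ω : DynOmega n v u) : List Bool :=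
  G (Frv n v u F ω) ω.1.2.1 ω.1.2.2

/-- The random variable `B`. -/
def Brv (ω : DynOmega n v u) : Fin (K n) → Fin (W n u) := ω.1.2.1

/-- Correctness of a dynamic retrieval scheme `(F, G, Query)`: on every realization in
the support of the process, querying `F(A, R_A, R_{B₀})` with a key of `A ∪ B₀` returns
its value, and querying `G(F(A, R_A, R_{B₀}), B, R_B)` with a key of `A ∪ B` returns its
value. -/
def Correct (F : FBuilder n v u) (G : GBuilder n v u) (Q : QueryFn v) : Prop :=
  ∀ ω : DynOmega n v u,
    (∀ i, Q (Frv n v u F ω) (key n u i (ω.1.1.1 i)) = ω.1.1.2.1 i) ∧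
    (∀ i : Fin (K n), Q (Frv n v u F ω) (i : ℕ) = ω.1.1.2.2 i) ∧
    (∀ i, Q (Grv n v u F G ω) (key n u i (ω.1.1.1 i)) = ω.1.1.2.1 i) ∧
    (∀ i, Q (Grv n v u F G ω) (key n u i (ω.1.2.1 i)) = ω.1.2.2 i)

/-- The plausible set `P_i(f)`: all triples `(x, r_x, r_i)` of an element `x` of part
`i`, a `v`-bit value `r_x` with first bit `1`, and a `v`-bit value `r_i`, such that some
realization `(A', R'_{A'}, R'_{B₀})` in the support of `(A, R_A, R_{B₀})` has
`F(A', R'_{A'}, R'_{B₀}) = f`, `x` the element of `A'` in part `i` with value `r_x`, and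
`r_i` the value of the key `i ∈ B₀` in `R'_{B₀}`. -/
def Plausible (F : FBuilder n v u) (f : List Bool) (i : Fin (K n)) :
    Set (Fin (W n u) × (Fin v → Bool) × (Fin v → Bool)) :=
  {p | ∃ d : FData n v u, ValidF n v u d ∧ F d.1 d.2.1 d.2.2 = f ∧
        d.1 i = p.1 ∧ d.2.1 i = p.2.1 ∧ d.2.2 i = p.2.2}

/-- A triple `(x, r_x, r_i) ∈ P_i(f)` *remains feasible after `B`* if the witness
`(A', R'_{A'}, R'_{B₀})` can additionally be chosen with `A' ∩ B = ∅`. -/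
def Feasible (F : FBuilder n v u) (f : List Bool) (i : Fin (K n))
    (B : Fin (K n) → Fin (W n u)) (p : Fin (W n u) × (Fin v → Bool) × (Fin v → Bool)) :
    Prop :=
  ∃ d : FData n v u, ValidF n v u d ∧ F d.1 d.2.1 d.2.2 = f ∧
    d.1 i = p.1 ∧ d.2.1 i = p.2.1 ∧ d.2.2 i = p.2.2 ∧ ∀ j, B j ≠ d.1 j

end DynRetrieval

namespace DynRetrieval

/-- **Claim 4.10.** Fix a realization `(A, R_A, R_{B₀}, B, R_B)` in the support of the
process (an element `ω` of the sample space) and an index `i ∈ {1, …, n/2}`.  If a triple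
`(x, r_x, r_i) ∈ P_i(F(A, R_A, R_{B₀}))` remains feasible after `B`, then the first bit
of `Query(G(F(A, R_A, R_{B₀}), B, R_B), x)` equals `1`; that is, the data structure `G`
must report that `x` belongs to `A` when queried with `x`. -/
theorem dynamic_feasible_must_return_A :
    ∀ n v u : ℕ, Hyp n v u →
    ∀ (F : FBuilder n v u) (G : GBuilder n v u) (Q : QueryFn v),
      Correct n v u F G Q →
    ∀ (ω : DynOmega n v u) (i : Fin (K n))
      (p : Fin (W n u) × (Fin v → Bool) × (Fin v → Bool)),
      p ∈ Plausible n v u F (Frv n v u F ω) i →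
      Feasible n v u F (Frv n v u F ω) i ω.1.2.1 p →
      firstBit (Q (Grv n v u F G ω) (key n u i p.1)) = true := by
  intro n v u _ F G Q hCorr ω i p _ hFeas
  obtain ⟨d, hValid, hF, hAi, hRi, _, hAvoid⟩ := hFeas
  have hvalid' : DynValid n v u (d, ω.1.2) :=
    ⟨hValid, hAvoid, ω.2.2.2⟩
  set ω' : DynOmega n v u := ⟨(d, ω.1.2), hvalid'⟩
  have hFrv : Frv n v u F ω' = Frv n v u F ω := hF
  have hGrv : Grv n v u F G ω' = Grv n v u F G ω := by
    simp only [Grv, hFrv]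
    rfl
  have hq := (hCorr ω').2.2.1 i
  rw [hGrv] at hq
  have hkey : (ω'.1.1.1 i) = p.1 := hAi
  rw [hkey] at hq
  rw [hq]
  have : ω'.1.1.2.1 i = p.2.1 := hRi
  rw [this]
  have hfb : firstBit (d.2.1 i) = true := hValid i
  rw [← hRi]
  exact hfb

end DynRetrieval
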